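/- Let d ≥ 2 with d not congruent to 0 mod 4 and f(x) = x^d - a over F_q with a ≠ 0. Define P_1(x) = x and P_n(x) = P_{n-1}(x)^d + (-1)^{d-1} x for n ≥ 2. If P_n(a) is an l-th power in F_q^* for some n ≥ 1 and some prime l dividing d, then the n-th iterate f_n(x) is reducible over F_q. -/

import Mathlib

open Polynomial

/-- `iter f n` is the n-th iterate of `f` under composition, with `iter f 0 = X`. -/
noncomputable def iter {F : Type*} [Field F] (f : F[X]) : ℕ → F[X]
  | 0 => X
  | n + 1 => (iter f n).comp f

/-- `P d a n` is the value `P_n(a)` where `P_1(x) = x` and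
`P_n(x) = P_{n-1}(x)^d + (-1)^(d-1) x` for `n ≥ 2`. (`P d a 0` is junk, set to `a`.) -/
def P {F : Type*} [Field F] (d : ℕ) (a : F) : ℕ → F
  | 0 => a
  | 1 => a
  | n + 2 => (P d a (n + 1)) ^ d + (-1 : F) ^ (d - 1) * a

section Helpers

variable {F : Type*} [Field F]

lemma iter_def (f : F[X]) (n : ℕ) : iter f (n + 1) = (iter f n).comp f := rfl

lemma iter_succ_left (f : F[X]) (n : ℕ) : iter f (n + 1) = f.comp (iter f n) := by
  induction n with
  | zero => simp [iter]
  | succ k ih =>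
    calc iter f (k + 2) = (f.comp (iter f k)).comp f := by rw [iter_def, ih]
      _ = f.comp ((iter f k).comp f) := comp_assoc f (iter f k) f
      _ = f.comp (iter f (k + 1)) := by rw [← iter_def]

lemma iter_monic_natDegree (d : ℕ) (hd : 1 ≤ d) (a : F) (n : ℕ) :
    (iter (X ^ d - C a) n).Monic ∧ (iter (X ^ d - C a) n).natDegree = d ^ n := by
  have hf : (X ^ d - C a : F[X]).Monic := monic_X_pow_sub_C a (by omega)
  have hfd : (X ^ d - C a : F[X]).natDegree = d := natDegree_X_pow_sub_C
  induction n with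
  | zero => exact ⟨monic_X, by simp [iter]⟩
  | succ k ih =>
    refine ⟨ih.1.comp hf (by rw [hfd]; omega), ?_⟩
    rw [iter_def, natDegree_comp, ih.2, hfd, pow_succ]

lemma irred_step (d : ℕ) (hd : 2 ≤ d) (a : F) (k : ℕ)
    (h : Irreducible (iter (X ^ d - C a) (k + 1))) :
    Irreducible (iter (X ^ d - C a) k) := by
  set f : F[X] := X ^ d - C a with hf
  have hcomp : iter f (k + 1) = (iter f k).comp f := rfl
  have key : ∀ T : F[X], IsUnit (T.comp f) → IsUnit T := by
    intro T hT
    have hdeg : T.natDegree * d = 0 := by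
      have h1 := Polynomial.natDegree_eq_zero_of_isUnit hT
      rwa [natDegree_comp, hf, natDegree_X_pow_sub_C] at h1
    have hT0 : T.natDegree = 0 := by
      rcases Nat.mul_eq_zero.mp hdeg with h1 | h1
      · exact h1
      · omega
    have hTC : T = C (T.coeff 0) := Polynomial.eq_C_of_natDegree_eq_zero hT0
    rw [hTC] at hT ⊢
    rwa [C_comp] at hT
  constructor
  · intro hu
    obtain ⟨r, hr, hrC⟩ := Polynomial.isUnit_iff.mp hu
    have : iter f (k + 1) = C r := by rw [hcomp, ← hrC, C_comp]
    exact h.not_isUnit (this ▸ isUnit_C.mpr hr)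
  · intro A B hAB
    have hEq : iter f (k + 1) = A.comp f * B.comp f := by
      rw [hcomp, hAB, mul_comp]
    rcases h.isUnit_or_isUnit hEq with h2 | h2
    · exact Or.inl (key _ h2)
    · exact Or.inr (key _ h2)

lemma eval_neg_iter (d : ℕ) (hd : 2 ≤ d) (a : F) (k : ℕ) :
    (iter (X ^ d - C a) k).eval (-a) = (-1) ^ (d ^ k) * P d a (k + 1) := by
  induction k with
  | zero => simp [iter, P]
  | succ k ih =>
    have hodd : Odd (d ^ (k + 1) + (d - 1)) := by
      rcases Nat.even_or_odd d with he | ho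
      · exact (he.pow_of_ne_zero (Nat.succ_ne_zero k)).add_odd
          (Nat.Even.sub_odd (by omega) he odd_one)
      · exact ho.pow.add_even (Nat.Odd.sub_odd ho odd_one)
    rw [iter_succ_left, eval_comp, ih]
    simp only [eval_sub, eval_pow, eval_X, eval_C]
    have hP : P d a (k + 2) = P d a (k + 1) ^ d + (-1 : F) ^ (d - 1) * a := rfl
    have hsign : ((-1 : F)) ^ (d ^ (k + 1)) * ((-1) ^ (d - 1) * a) = -a := by
      rw [← mul_assoc, ← pow_add, hodd.neg_one_pow, neg_one_mul]
    rw [hP, mul_pow, ← pow_mul, ← pow_succ, mul_add, hsign, sub_eq_add_neg]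

lemma geom_sum_mul_card (q D : ℕ) (hq : 1 ≤ q) :
    (∑ i ∈ Finset.range D, q ^ i) * (q - 1) + 1 = q ^ D := by
  induction D with
  | zero => simp
  | succ k ih =>
    rw [Finset.sum_range_succ]
    have h1 : 1 + (q - 1) = q := by omega
    calc ((∑ i ∈ Finset.range k, q ^ i) + q ^ k) * (q - 1) + 1
        = ((∑ i ∈ Finset.range k, q ^ i) * (q - 1) + 1) + q ^ k * (q - 1) := by ring
      _ = q ^ k + q ^ k * (q - 1) := by rw [ih]
      _ = q ^ k * (1 + (q - 1)) := by ring
      _ = q ^ (k + 1) := by rw [h1, pow_succ, Nat.mul_comm]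

variable [Fintype F] {E : Type*} [Field E] [Algebra F E]

lemma mem_range_algebraMap_of_pow_card (c : E) (hc : c ^ Fintype.card F = c) :
    c ∈ Set.range (algebraMap F E) := by
  classical
  set q := Fintype.card F with hq
  have hq2 : 1 < q := Fintype.one_lt_card
  set pol : E[X] := X ^ q - X with hpoldef
  have hpol : pol ≠ 0 := FiniteField.X_pow_card_sub_X_ne_zero E hq2
  have hdeg : pol.natDegree = q := FiniteField.X_pow_card_sub_X_natDegree_eq E hq2
  set S : Finset E := Finset.univ.image (algebraMap F E) with hS
  set T : Finset E := pol.roots.toFinset with hT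
  have hST : S ⊆ T := by
    intro x hx
    rw [hS, Finset.mem_image] at hx
    obtain ⟨y, -, rfl⟩ := hx
    rw [hT, Multiset.mem_toFinset, mem_roots hpol]
    show pol.eval _ = 0
    simp only [hpoldef, eval_sub, eval_pow, eval_X]
    rw [← map_pow, FiniteField.pow_card, sub_self]
  have hcardS : S.card = q := by
    rw [hS, Finset.card_image_of_injective _ (algebraMap F E).injective,
      Finset.card_univ]
  have hcardT : T.card ≤ q := by
    calc T.card ≤ Multiset.card pol.roots := Multiset.toFinset_card_le _
      _ ≤ pol.natDegree := pol.card_roots'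
      _ = q := hdeg
  have hTS : S = T := Finset.eq_of_subset_of_card_le hST (by omega)
  have hcT : c ∈ T := by
    rw [hT, Multiset.mem_toFinset, mem_roots hpol]
    show pol.eval _ = 0
    simp only [hpoldef, eval_sub, eval_pow, eval_X]
    rw [hc, sub_self]
  rw [← hTS, hS, Finset.mem_image] at hcT
  obtain ⟨y, -, hy⟩ := hcT
  exact ⟨y, hy⟩

lemma exists_pow_card_ringHom (F E : Type*) [Field F] [Fintype F] [Field E] [Algebra F E] :
    ∃ ψ : E →+* E, ∀ y : E, ψ y = y ^ Fintype.card F := by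
  obtain ⟨p, hchar⟩ := CharP.exists F
  haveI := hchar
  obtain ⟨k, hp, hcard⟩ := FiniteField.card F p
  haveI : Fact p.Prime := ⟨hp⟩
  haveI : CharP E p := charP_of_injective_algebraMap (algebraMap F E).injective p
  haveI : ExpChar E p := ExpChar.prime hp
  exact ⟨iterateFrobenius E p k, fun y => by rw [iterateFrobenius_def, hcard]⟩

lemma exists_annihilator_of_pow_pow (ψ : E →+* E) (hψ : ∀ y : E, ψ y = y ^ Fintype.card F)
    (x : E) (r : ℕ) (hr : 1 ≤ r) (hx : x ^ Fintype.card F ^ r = x) :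
    ∃ G : F[X], G.Monic ∧ G.natDegree = r ∧ Polynomial.aeval x G = 0 := by
  classical
  set q := Fintype.card F with hq
  set h : ℕ → E[X] := fun i => X - C (x ^ q ^ i) with hh
  set g : E[X] := ∏ i ∈ Finset.range r, h i with hg
  have hgmonic : g.Monic := monic_prod_of_monic _ _ fun i _ => monic_X_sub_C _
  have hgdeg : g.natDegree = r := by
    rw [hg, natDegree_prod _ _ fun i _ => X_sub_C_ne_zero _]
    simp only [hh, natDegree_X_sub_C]
    rw [Finset.sum_const, Finset.card_range, smul_eq_mul, mul_one]
  have hgx : g.eval x = 0 := by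
    rw [hg, eval_prod]
    apply Finset.prod_eq_zero (Finset.mem_range.mpr hr)
    simp [hh]
  have hmap : g.map ψ = g := by
    rw [hg, Polynomial.map_prod]
    have hkey : ∀ i, (h i).map ψ = h (i + 1) := by
      intro i
      simp only [hh, Polynomial.map_sub, map_X, map_C, hψ]
      rw [← pow_mul, ← pow_succ]
    rw [Finset.prod_congr rfl fun i _ => hkey i]
    have h0r : h r = h 0 := by
      simp only [hh]
      rw [hx, pow_zero, pow_one]
    have e1 := Finset.prod_range_succ h r
    have e2 := Finset.prod_range_succ' h r
    rw [h0r] at e1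
    have e3 : (∏ i ∈ Finset.range r, h (i + 1)) * h 0
        = (∏ i ∈ Finset.range r, h i) * h 0 := e2.symm.trans e1
    exact mul_right_cancel₀ (X_sub_C_ne_zero _) e3
  have hcoeff : ∀ j, g.coeff j ∈ Set.range (algebraMap F E) := by
    intro j
    apply mem_range_algebraMap_of_pow_card
    have h1 := congrArg (fun Pp : E[X] => Pp.coeff j) hmap
    simp only [Polynomial.coeff_map] at h1
    rw [hψ] at h1
    exact h1
  have hlift : g ∈ Polynomial.lifts (algebraMap F E) :=
    (Polynomial.lifts_iff_coeff_lifts g).mpr hcoeff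
  obtain ⟨G, hGmap, hGdeg, hGmonic⟩ :=
    Polynomial.lifts_and_degree_eq_and_monic hlift hgmonic
  refine ⟨G, hGmonic, ?_, ?_⟩
  · rw [← hgdeg]
    exact natDegree_eq_of_degree_eq hGdeg
  · rw [Polynomial.aeval_def, ← Polynomial.eval_map, hGmap, hgx]

lemma roots_eq_frobenius_orbit [IsAlgClosed E]
    (ψ : E →+* E) (hψ : ∀ y : E, ψ y = y ^ Fintype.card F)
    {M : F[X]} (hMirr : Irreducible M) (hMmonic : M.Monic) {β : E}
    (hβ : Polynomial.aeval β M = 0) :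
    (M.map (algebraMap F E)).roots
      = (Multiset.range M.natDegree).map (fun i => β ^ Fintype.card F ^ i) := by
  classical
  set q := Fintype.card F with hq
  set φ := algebraMap F E with hφ
  have htpos : 0 < M.natDegree := hMirr.natDegree_pos
  have hMφne : M.map φ ≠ 0 := (hMmonic.map φ).ne_zero
  have hψφ : ∀ y : F, ψ (φ y) = φ y := by
    intro y
    rw [hψ, ← map_pow, FiniteField.pow_card]
  -- every Frobenius power of β is a root
  have hconj : ∀ i : ℕ, Polynomial.aeval (β ^ q ^ i) M = 0 := by
    intro i
    induction i with
    | zero => simpa using hβ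
    | succ j ih =>
      have hstep : β ^ q ^ (j + 1) = ψ (β ^ q ^ j) := by
        rw [hψ, ← pow_mul, ← pow_succ]
      have h1 : ψ (Polynomial.aeval (β ^ q ^ j) M) = Polynomial.aeval (ψ (β ^ q ^ j)) M := by
        rw [Polynomial.aeval_def, Polynomial.aeval_def, Polynomial.hom_eval₂]
        congr 1
        exact RingHom.ext hψφ
      rw [hstep, ← h1, ih, map_zero]
  -- distinctness
  have hiter : ∀ (y : E) (i : ℕ), ψ^[i] y = y ^ q ^ i := by
    intro y i
    induction i with
    | zero => simp
    | succ j ih =>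
      rw [Function.iterate_succ_apply', ih, hψ, ← pow_mul, ← pow_succ]
  have hmin : minpoly F β = M :=
    (minpoly.eq_of_irreducible_of_monic hMirr hβ hMmonic).symm
  have hne : ∀ i j : ℕ, i < j → j < M.natDegree → β ^ q ^ i ≠ β ^ q ^ j := by
    intro i j hij hjt heq
    have h1 : ψ^[i] (β ^ q ^ (j - i)) = ψ^[i] β := by
      rw [hiter, hiter, ← pow_mul, ← pow_add]
      have hji : j - i + i = j := by omega
      rw [hji]
      exact heq.symm
    have h2 : β ^ q ^ (j - i) = β :=
      (Function.Injective.iterate ψ.injective i) h1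
    obtain ⟨G, hGmonic, hGdeg, hGroot⟩ :=
      exists_annihilator_of_pow_pow ψ hψ β (j - i) (by omega) h2
    have hle : degree (minpoly F β) ≤ degree G := minpoly.min F β hGmonic hGroot
    rw [hmin] at hle
    have h3 : M.natDegree ≤ j - i := by
      have h4 := natDegree_le_natDegree hle
      rwa [hGdeg] at h4
    omega
  have hinj : ∀ i ∈ Multiset.range M.natDegree, ∀ j ∈ Multiset.range M.natDegree,
      β ^ q ^ i = β ^ q ^ j → i = j := by
    intro i hi j hj hEq
    rw [Multiset.mem_range] at hi hj
    by_contra hne'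
    rcases Nat.lt_or_ge i j with h | h
    · exact hne i j h hj hEq
    · have : j < i := by omega
      exact hne j i (by omega) hi hEq.symm
  -- counting
  have hcard : Multiset.card (M.map φ).roots = M.natDegree := by
    have hsp : (M.map φ).Splits := IsAlgClosed.splits (M.map φ)
    have h5 := (Polynomial.splits_iff_card_roots).mp hsp
    rwa [natDegree_map] at h5
  have hnodupR : (M.map φ).roots.Nodup := by
    apply Polynomial.nodup_roots
    exact (PerfectField.separable_of_irreducible hMirr).map
  set N : Multiset E := (Multiset.range M.natDegree).map (fun i => β ^ q ^ i) with hN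
  have hNnodup : N.Nodup := Multiset.Nodup.map_on hinj (Multiset.nodup_range _)
  have hNsub : N ⊆ (M.map φ).roots := by
    intro x hx
    rw [hN, Multiset.mem_map] at hx
    obtain ⟨i, -, rfl⟩ := hx
    rw [mem_roots hMφne]
    show (M.map φ).eval _ = 0
    have h6 := hconj i
    rwa [Polynomial.aeval_def, ← Polynomial.eval_map] at h6
  have hNle : N ≤ (M.map φ).roots := (Multiset.le_iff_subset hNnodup).mpr hNsub
  have hNcard : Multiset.card N = M.natDegree := by
    rw [hN, Multiset.card_map, Multiset.card_range]
  exact (Multiset.eq_of_le_of_card_le hNle (by omega)).symm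

end Helpers

theorem stmt16 (q d n l : ℕ) (hd : 2 ≤ d) (hd4 : ¬ (4 ∣ d)) (hn : 1 ≤ n)
    (hl : l.Prime) (hld : l ∣ d)
    (F : Type*) [Field F] [Fintype F] (hF : Fintype.card F = q)
    (a : F) (ha : a ≠ 0)
    (hpow : ∃ b : F, b ≠ 0 ∧ b ^ l = P d a n) :
    ¬ Irreducible (iter (X ^ d - C a : F[X]) n) := by
  subst hF
  intro hirr
  obtain ⟨b, hb0, hbl⟩ := hpow
  obtain ⟨n', rfl⟩ : ∃ n', n = n' + 1 := ⟨n - 1, by omega⟩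
  set q := Fintype.card F with hq
  have hq2 : 2 ≤ q := Fintype.one_lt_card
  set f : F[X] := X ^ d - C a with hf
  have hl2 : 2 ≤ l := hl.two_le
  obtain ⟨m, hm⟩ := hld
  have hm1 : 1 ≤ m := by
    rcases Nat.eq_zero_or_pos m with h | h
    · subst h; omega
    · exact h
  have hmd : m < d := by
    calc m < 2 * m := by omega
      _ ≤ l * m := Nat.mul_le_mul_right m hl2
      _ = d := hm.symm
  have hiterk := fun k => iter_monic_natDegree d (by omega) a k
  by_cases hlq : l ∣ (q - 1)
  · -- main case: l ∣ q - 1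
    set E := AlgebraicClosure F with hE
    set φ := algebraMap F E with hφ
    obtain ⟨ψ, hψ⟩ := exists_pow_card_ringHom F E
    set D := d ^ n' with hD
    have hDpos : 0 < D := pow_pos (by omega) n'
    set M := iter f n' with hM
    have hMmonic := (hiterk n').1
    have hMdeg := (hiterk n').2
    have hMirr : Irreducible M := irred_step d hd a n' hirr
    set fn := iter f (n' + 1) with hfn
    have hfnmonic := (hiterk (n' + 1)).1
    have hfndeg := (hiterk (n' + 1)).2
    -- a root of fn in E
    have hfnφdeg : (fn.map φ).degree ≠ 0 := by
      rw [degree_eq_natDegree (hfnmonic.map φ).ne_zero, natDegree_map, hfndeg]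
      exact_mod_cast pow_ne_zero (n' + 1) (by omega : d ≠ 0)
    obtain ⟨γ, hγ0⟩ := IsAlgClosed.exists_root _ hfnφdeg
    have hγ : Polynomial.aeval γ fn = 0 := by
      rw [Polynomial.aeval_def, ← Polynomial.eval_map]
      exact hγ0
    set β : E := γ ^ d - φ a with hβdef
    have hβ : Polynomial.aeval β M = 0 := by
      have h1 : Polynomial.aeval γ fn = Polynomial.aeval (Polynomial.aeval γ f) M := by
        rw [hfn, iter_def, Polynomial.aeval_comp]
      have h2 : Polynomial.aeval γ f = β := by
        rw [hf, hβdef]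
        simp [hφ]
      rw [h1, h2] at hγ
      exact hγ
    have hγint : Polynomial.aeval γ fn = 0 := by
      have h1 : Polynomial.aeval γ fn = Polynomial.aeval (Polynomial.aeval γ f) M := by
        rw [hfn, iter_def, Polynomial.aeval_comp]
      rw [h1]
      have h2 : Polynomial.aeval γ f = β := by
        rw [hf, hβdef]; simp [hφ]
      rw [h2]; exact hβ
    have hroots := roots_eq_frobenius_orbit ψ hψ hMirr hMmonic hβ
    rw [hMdeg] at hroots
    set u : E := γ ^ d with hu
    have huβ : u = β + φ a := by rw [hβdef]; ring
    set s := ∑ i ∈ Finset.range D, q ^ i with hs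
    have hupow : ∀ i : ℕ, u ^ q ^ i = β ^ q ^ i + φ a := by
      intro i
      induction i with
      | zero => simpa using huβ
      | succ j ih =>
        have e1 : ∀ z : E, z ^ q ^ (j + 1) = ψ (z ^ q ^ j) := by
          intro z
          rw [hψ, ← pow_mul, ← pow_succ]
        rw [e1, ih, map_add, ← e1]
        congr 1
        rw [hψ, ← map_pow, FiniteField.pow_card]
    -- the key identity u^s = φ (P d a n)
    have hkey : u ^ s = φ (P d a (n' + 1)) := by
      have hL : φ (M.eval (-a)) = (M.map φ).eval (φ (-a)) := by
        rw [Polynomial.eval_map, Polynomial.eval₂_hom]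
      have hLv : M.eval (-a) = (-1) ^ D * P d a (n' + 1) := by
        rw [hM, hf]
        exact eval_neg_iter d hd a n'
      have hR : (M.map φ).eval (φ (-a)) = (-1 : E) ^ D * u ^ s := by
        have hsplit : M.map φ = (((M.map φ).roots).map (fun r => X - C r)).prod :=
          (IsAlgClosed.splits (M.map φ)).eq_prod_roots_of_monic (hMmonic.map φ)
        rw [hsplit, Polynomial.eval_multiset_prod, hroots, Multiset.map_map,
          Multiset.map_map]
        have hfeq : (Polynomial.eval (φ (-a)) ∘ (fun r : E => X - C r)) ∘
            (fun i : ℕ => β ^ q ^ i) = fun i : ℕ => (-1 : E) * u ^ q ^ i := by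
          funext i
          simp only [Function.comp_apply, eval_sub, eval_X, eval_C, map_neg]
          rw [hupow i]
          ring
        rw [hfeq]
        have hconv : (Multiset.map (fun i => (-1 : E) * u ^ q ^ i)
            (Multiset.range D)).prod
            = ∏ i ∈ Finset.range D, ((-1 : E) * u ^ q ^ i) := by
          rw [Finset.prod_eq_multiset_prod, Finset.range_val]
        rw [hconv, Finset.prod_mul_distrib, Finset.prod_const, Finset.card_range,
          Finset.prod_pow_eq_pow_sum, hs]
      have hcomb : (-1 : E) ^ D * φ (P d a (n' + 1)) = (-1 : E) ^ D * u ^ s := by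
        have h7 := hL
        rw [hLv, hR] at h7
        rw [map_mul, map_pow, map_neg, map_one] at h7
        exact h7
      have hne1 : ((-1 : E) ^ D) ≠ 0 := pow_ne_zero _ (neg_ne_zero.mpr one_ne_zero)
      exact (mul_left_cancel₀ hne1 hcomb).symm
    have hP0 : P d a (n' + 1) ≠ 0 := by
      rw [← hbl]
      exact pow_ne_zero _ hb0
    have hs0 : s ≠ 0 := by
      have hpos : 0 < s := by
        apply Finset.sum_pos
        · intro i _
          exact pow_pos (by omega) i
        · exact ⟨0, Finset.mem_range.mpr hDpos⟩
      omega
    have hu0 : u ≠ 0 := by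
      intro h0
      rw [h0, zero_pow hs0] at hkey
      exact hP0 ((_root_.map_eq_zero φ).mp hkey.symm)
    set e := s * ((q - 1) / l) with he
    have hel : e * l = s * (q - 1) := by
      rw [he, mul_assoc, Nat.div_mul_cancel hlq]
    have hue : u ^ e = 1 := by
      rw [he, pow_mul, hkey, ← map_pow, ← hbl, ← pow_mul, Nat.mul_div_cancel' hlq,
        FiniteField.pow_card_sub_one_eq_one b hb0, map_one]
    have hgeom : s * (q - 1) + 1 = q ^ D := geom_sum_mul_card q D (by omega)
    obtain ⟨c, hcl⟩ := IsAlgClosed.exists_pow_nat_eq u (n := l) (by omega)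
    have hc0 : c ≠ 0 := by
      intro h0
      rw [h0, zero_pow (by omega : l ≠ 0)] at hcl
      exact hu0 hcl.symm
    have hcQ : c ^ q ^ D = c := by
      have h1 : c ^ (s * (q - 1)) = 1 := by
        rw [← hel, mul_comm e l, pow_mul, hcl, hue]
      calc c ^ q ^ D = c ^ (s * (q - 1) + 1) := by rw [hgeom]
        _ = c ^ (s * (q - 1)) * c := by rw [pow_succ]
        _ = c := by rw [h1, one_mul]
    set ζ : E := γ ^ m * c⁻¹ with hζ
    have hζl : ζ ^ l = 1 := by
      rw [hζ, mul_pow, inv_pow, ← pow_mul]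
      have hml : m * l = d := by rw [Nat.mul_comm]; omega
      rw [hml, hcl, ← hu, mul_inv_cancel₀ hu0]
    have hζq1 : ζ ^ (q - 1) = 1 := by
      obtain ⟨w, hw⟩ := hlq
      rw [hw, pow_mul, hζl, one_pow]
    have hζq : ζ ^ q = ζ := by
      calc ζ ^ q = ζ ^ (q - 1 + 1) := by congr 1; omega
        _ = ζ ^ (q - 1) * ζ := by rw [pow_succ]
        _ = ζ := by rw [hζq1, one_mul]
    have hζQ : ∀ i : ℕ, ζ ^ q ^ i = ζ := by
      intro i
      induction i with
      | zero => simp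
      | succ j ih => rw [pow_succ, pow_mul, ih, hζq]
    have hγmc : γ ^ m = ζ * c := by
      rw [hζ, mul_assoc, inv_mul_cancel₀ hc0, mul_one]
    have hδQ : (γ ^ m) ^ q ^ D = γ ^ m := by
      rw [hγmc, mul_pow, hζQ, hcQ]
    obtain ⟨G, hGmonic, hGdeg, hGroot⟩ :=
      exists_annihilator_of_pow_pow ψ hψ (γ ^ m) D hDpos hδQ
    set H := G.comp (X ^ m) with hH
    have hHmonic : H.Monic := hGmonic.comp (monic_X_pow m) (by rw [natDegree_X_pow]; omega)
    have hHroot : Polynomial.aeval γ H = 0 := by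
      rw [hH, Polynomial.aeval_comp]
      simpa using hGroot
    have hminγ : minpoly F γ = fn :=
      (minpoly.eq_of_irreducible_of_monic hirr hγ hfnmonic).symm
    have hle := minpoly.min F γ hHmonic hHroot
    rw [hminγ] at hle
    have hnat : fn.natDegree ≤ H.natDegree := natDegree_le_natDegree hle
    rw [hfndeg, hH, natDegree_comp, natDegree_X_pow, hGdeg] at hnat
    have hlt : D * m < d ^ (n' + 1) := by
      rw [pow_succ]
      exact (Nat.mul_lt_mul_left hDpos).mpr hmd
    omega
  · -- easy case: x ↦ x^l is surjective on F
    have hcop : Nat.Coprime l (q - 1) := (Nat.Prime.coprime_iff_not_dvd hl).mpr hlq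
    have hapow : ∃ c : F, c ^ l = a := by
      by_cases hq1 : 1 < q - 1
      · obtain ⟨x, -, hx⟩ := Nat.exists_mul_mod_eq_one_of_coprime hcop hq1
        refine ⟨a ^ x, ?_⟩
        rw [← pow_mul]
        have hdm := Nat.div_add_mod (l * x) (q - 1)
        rw [hx] at hdm
        have hlx : l * x = (q - 1) * (l * x / (q - 1)) + 1 := by omega
        rw [mul_comm x l, hlx, pow_succ, pow_mul,
          FiniteField.pow_card_sub_one_eq_one a ha, one_pow, one_mul]
      · have hq1' : q - 1 = 1 := by omega
        have ha1 : a = 1 := by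
          have h1 := FiniteField.pow_card_sub_one_eq_one a ha
          rwa [hq1', pow_one] at h1
        exact ⟨1, by rw [one_pow, ha1]⟩
    obtain ⟨c, hc⟩ := hapow
    set g := iter f n' with hg
    have hfe : iter f (n' + 1) = g ^ d - C a := by
      rw [iter_succ_left, hf]
      simp [sub_comp, pow_comp, X_comp, C_comp]; rfl
    have hdvd : (g ^ m - C c) ∣ iter f (n' + 1) := by
      rw [hfe, ← hc, C_pow]
      have hgd : g ^ d = (g ^ m) ^ l := by
        rw [← pow_mul]
        congr 1
        rw [Nat.mul_comm]
        omega
      rw [hgd]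
      exact sub_dvd_pow_sub_pow _ _ l
    obtain ⟨B, hB⟩ := hdvd
    have hgdeg : g.natDegree = d ^ n' := (hiterk n').2
    have hAdeg : (g ^ m - C c).natDegree = m * d ^ n' := by
      rw [natDegree_sub_C, natDegree_pow, hgdeg]
    have hApos : 0 < (g ^ m - C c).natDegree := by
      rw [hAdeg]
      positivity
    have hA0 : g ^ m - C c ≠ 0 := by
      intro h0
      rw [h0] at hApos
      simp at hApos
    rcases hirr.isUnit_or_isUnit hB with hu | hu
    · have h8 := Polynomial.natDegree_eq_zero_of_isUnit hu
      omega
    · have hBdeg := Polynomial.natDegree_eq_zero_of_isUnit hu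
      have hB0 : B ≠ 0 := by
        intro h0
        rw [h0, mul_zero] at hB
        exact (hiterk (n' + 1)).1.ne_zero hB
      have hdegs : (iter f (n' + 1)).natDegree
          = (g ^ m - C c).natDegree + B.natDegree := by
        rw [hB, natDegree_mul hA0 hB0]
      rw [(hiterk (n' + 1)).2, hAdeg, hBdeg] at hdegs
      have hlt : m * d ^ n' < d ^ (n' + 1) := by
        rw [pow_succ, Nat.mul_comm (d ^ n') d]
        exact (Nat.mul_lt_mul_right (pow_pos (by omega) n')).mpr hmd
      omega
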